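/- Let G be a finite set of C¹ diffeomorphisms of ℝ, closed under taking inverses, with every g ∈ G having everywhere positive derivative. Assume moreover: (a) there is a constant C₀ ≥ 1 with 1/C₀ ≤ g'(y) ≤ C₀ for every g ∈ G and every y ∈ ℝ; (b) for every g ∈ G the function y ↦ log g'(y) is uniformly continuous on ℝ; (c) there is a compact set K ⊂ ℝ such that w(x) ∈ K for every point x of the hyperbolic set E⁺ = { x ∈ ℝ : λ_*(x) > 0 } and every word w in G. If E⁺ has positive Lebesgue measure, then G has a hyperbolic resilient point: there exist u ∈ ℝ and words H and R in G such that H(u) = u, H'(u) < 1, R(u) ≠ u, and H^ℓ(R(u)) → u as ℓ → ∞. -/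

import Mathlib

open MeasureTheory Filter Topology

/-- Composition of a list of maps: the list `[g_k, …, g₁]` composes to `g_k ∘ ⋯ ∘ g₁`
(the empty list gives the identity map). -/
def wordComp (w : List (ℝ → ℝ)) : ℝ → ℝ := w.foldr (· ∘ ·) id

/-- A word in `G` is a finite list of elements of `G`. -/
def IsWord (G : Finset (ℝ → ℝ)) (w : List (ℝ → ℝ)) : Prop := ∀ g ∈ w, g ∈ G

/-- The maximal `n`-expansion `μ_n(x)`: the maximum of `w'(x)` over words `w` in `G`
of length at most `n`. -/
noncomputable def maxExp (G : Finset (ℝ → ℝ)) (n : ℕ) (x : ℝ) : ℝ :=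
  sSup {d : ℝ | ∃ w : List (ℝ → ℝ), IsWord G w ∧ w.length ≤ n ∧ d = deriv (wordComp w) x}

/-- The transverse expansion exponent `λ_*(x) = limsup_n log(μ_n(x))/n`, in `[0,∞]`. -/
noncomputable def expExponent (G : Finset (ℝ → ℝ)) (x : ℝ) : ENNReal :=
  Filter.limsup (fun n : ℕ => ENNReal.ofReal (Real.log (maxExp G n x) / n)) Filter.atTop

namespace ResilientAux

lemma wordComp_nil : wordComp ([] : List (ℝ → ℝ)) = id := rfl

lemma wordComp_cons (g : ℝ → ℝ) (l : List (ℝ → ℝ)) :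
    wordComp (g :: l) = g ∘ wordComp l := rfl

lemma wordComp_singleton (g : ℝ → ℝ) : wordComp [g] = g := rfl

lemma wordComp_append (u v : List (ℝ → ℝ)) :
    wordComp (u ++ v) = wordComp u ∘ wordComp v := by
  induction u with
  | nil => rfl
  | cons g l ih => rw [List.cons_append, wordComp_cons, wordComp_cons, ih]; rfl

lemma isWord_append {G : Finset (ℝ → ℝ)} {u v : List (ℝ → ℝ)}
    (hu : IsWord G u) (hv : IsWord G v) : IsWord G (u ++ v) := by
  intro g hg
  rcases List.mem_append.1 hg with h | h
  · exact hu g h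
  · exact hv g h

section Words

variable {G : Finset (ℝ → ℝ)}

lemma word_diff (hC1 : ∀ g ∈ G, ContDiff ℝ 1 g) :
    ∀ {w : List (ℝ → ℝ)}, IsWord G w → Differentiable ℝ (wordComp w) := by
  intro w
  induction w with
  | nil => intro _; exact differentiable_id
  | cons g l ih =>
      intro hw
      have hg : Differentiable ℝ g := (hC1 g (hw g (by simp))).differentiable one_ne_zero
      have hl := ih (fun a ha => hw a (by simp [ha]))
      rw [wordComp_cons]
      exact hg.comp hl

lemma deriv_word_cons (hC1 : ∀ g ∈ G, ContDiff ℝ 1 g) {g : ℝ → ℝ} {l : List (ℝ → ℝ)}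
    (hw : IsWord G (g :: l)) (x : ℝ) :
    deriv (wordComp (g :: l)) x = deriv g (wordComp l x) * deriv (wordComp l) x := by
  have hg : Differentiable ℝ g := (hC1 g (hw g (by simp))).differentiable one_ne_zero
  have hl : Differentiable ℝ (wordComp l) := word_diff hC1 (fun a ha => hw a (by simp [ha]))
  rw [wordComp_cons]
  exact deriv_comp x (hg.differentiableAt) (hl.differentiableAt)

lemma deriv_word_append (hC1 : ∀ g ∈ G, ContDiff ℝ 1 g) :
    ∀ {u v : List (ℝ → ℝ)}, IsWord G u → IsWord G v → ∀ x : ℝ,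
    deriv (wordComp (u ++ v)) x
      = deriv (wordComp u) (wordComp v x) * deriv (wordComp v) x := by
  intro u
  induction u with
  | nil => intro v _ _ x; simp [wordComp_nil]
  | cons g l ih =>
      intro v hu hv x
      have hl : IsWord G l := fun a ha => hu a (by simp [ha])
      have hlv : IsWord G (l ++ v) := isWord_append hl hv
      have h1 : deriv (wordComp (g :: (l ++ v))) x
          = deriv g (wordComp (l ++ v) x) * deriv (wordComp (l ++ v)) x :=
        deriv_word_cons hC1 (by
          intro a ha
          rcases List.mem_cons.1 ha with h | h
          · exact hu a (by simp [h])
          · exact hlv a h) x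
      have h2 : deriv (wordComp (g :: l)) (wordComp v x)
          = deriv g (wordComp l (wordComp v x)) * deriv (wordComp l) (wordComp v x) :=
        deriv_word_cons hC1 hu (wordComp v x)
      rw [List.cons_append, h1, ih hl hv x, h2, wordComp_append]
      simp only [Function.comp_apply]
      ring

lemma deriv_word_pos (hC1 : ∀ g ∈ G, ContDiff ℝ 1 g)
    (hpos : ∀ g ∈ G, ∀ y : ℝ, 0 < deriv g y) :
    ∀ {w : List (ℝ → ℝ)}, IsWord G w → ∀ x : ℝ, 0 < deriv (wordComp w) x := by
  intro w
  induction w with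
  | nil => intro _ x; simp [wordComp_nil]
  | cons g l ih =>
      intro hw x
      rw [deriv_word_cons hC1 hw x]
      exact mul_pos (hpos g (hw g (by simp)) _) (ih (fun a ha => hw a (by simp [ha])) x)

lemma deriv_word_le {C₀ : ℝ} (hC1 : ∀ g ∈ G, ContDiff ℝ 1 g) (hC₀ : 1 ≤ C₀)
    (hbound : ∀ g ∈ G, ∀ y : ℝ, 1 / C₀ ≤ deriv g y ∧ deriv g y ≤ C₀)
    (hpos : ∀ g ∈ G, ∀ y : ℝ, 0 < deriv g y) :
    ∀ {w : List (ℝ → ℝ)}, IsWord G w → ∀ x : ℝ, deriv (wordComp w) x ≤ C₀ ^ w.length := by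
  intro w
  induction w with
  | nil => intro _ x; simp [wordComp_nil]
  | cons g l ih =>
      intro hw x
      have hl : IsWord G l := fun a ha => hw a (by simp [ha])
      rw [deriv_word_cons hC1 hw x]
      have h1 := (hbound g (hw g (by simp)) (wordComp l x)).2
      have h2 := ih hl x
      have h3 : (0:ℝ) < deriv (wordComp l) x := deriv_word_pos hC1 hpos hl x
      calc deriv g (wordComp l x) * deriv (wordComp l) x
          ≤ C₀ * C₀ ^ l.length := by
            apply mul_le_mul h1 h2 (le_of_lt h3) (by linarith)
        _ = C₀ ^ (g :: l).length := by rw [List.length_cons]; ring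

lemma letter_lip_ball {g : ℝ → ℝ} {C : ℝ} {s : Set ℝ} (hconv : Convex ℝ s)
    (hg : Differentiable ℝ g) (hb : ∀ ξ ∈ s, deriv g ξ ≤ C)
    (hpos : ∀ ξ : ℝ, 0 < deriv g ξ) {z z' : ℝ} (hz : z ∈ s) (hz' : z' ∈ s) :
    |g z - g z'| ≤ C * |z - z'| := by
  have := Convex.norm_image_sub_le_of_norm_deriv_le
    (f := g) (s := s) (fun ξ _ => hg.differentiableAt)
    (fun ξ hξ => by
      rw [Real.norm_eq_abs, abs_of_pos (hpos ξ)]; exact hb ξ hξ) hconv hz' hz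
  simpa [Real.norm_eq_abs] using this

lemma word_lip {C₀ : ℝ} (hC1 : ∀ g ∈ G, ContDiff ℝ 1 g) (hC₀ : 1 ≤ C₀)
    (hbound : ∀ g ∈ G, ∀ y : ℝ, 1 / C₀ ≤ deriv g y ∧ deriv g y ≤ C₀)
    (hpos : ∀ g ∈ G, ∀ y : ℝ, 0 < deriv g y) :
    ∀ {w : List (ℝ → ℝ)}, IsWord G w → ∀ z z' : ℝ,
    |wordComp w z - wordComp w z'| ≤ C₀ ^ w.length * |z - z'| := by
  intro w
  induction w with
  | nil => intro _ z z'; simp [wordComp_nil]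
  | cons g l ih =>
      intro hw z z'
      have hgG := hw g (by simp)
      have hl : IsWord G l := fun a ha => hw a (by simp [ha])
      have hg : Differentiable ℝ g := (hC1 g hgG).differentiable one_ne_zero
      have step : |g (wordComp l z) - g (wordComp l z')| ≤ C₀ * |wordComp l z - wordComp l z'| :=
        letter_lip_ball convex_univ hg (fun ξ _ => (hbound g hgG ξ).2) (hpos g hgG)
          (Set.mem_univ _) (Set.mem_univ _)
      calc |wordComp (g :: l) z - wordComp (g :: l) z'|
          = |g (wordComp l z) - g (wordComp l z')| := rfl
        _ ≤ C₀ * |wordComp l z - wordComp l z'| := step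
        _ ≤ C₀ * (C₀ ^ l.length * |z - z'|) := by
            apply mul_le_mul_of_nonneg_left (ih hl z z') (by linarith)
        _ = C₀ ^ (g :: l).length * |z - z'| := by rw [List.length_cons]; ring

end Words

end ResilientAux

namespace ResilientAux

section Inv

variable {G : Finset (ℝ → ℝ)} (φ : (ℝ → ℝ) → (ℝ → ℝ))

/-- inverse word: reverse the list and invert each letter. -/
def invW (w : List (ℝ → ℝ)) : List (ℝ → ℝ) := (w.map φ).reverse

lemma invW_nil : invW φ [] = [] := rfl

lemma invW_cons (g : ℝ → ℝ) (l : List (ℝ → ℝ)) :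
    invW φ (g :: l) = invW φ l ++ [φ g] := by
  simp [invW]

lemma invW_concat (g : ℝ → ℝ) (l : List (ℝ → ℝ)) :
    invW φ (l ++ [g]) = φ g :: invW φ l := by
  simp [invW]

lemma invW_isWord (hφG : ∀ g ∈ G, φ g ∈ G) {w : List (ℝ → ℝ)} (hw : IsWord G w) :
    IsWord G (invW φ w) := by
  intro g hg
  rw [invW, List.mem_reverse, List.mem_map] at hg
  obtain ⟨b, hb, rfl⟩ := hg
  exact hφG b (hw b hb)

lemma invW_left (hφl : ∀ g ∈ G, ∀ t : ℝ, φ g (g t) = t) :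
    ∀ {w : List (ℝ → ℝ)}, IsWord G w → ∀ t : ℝ,
      wordComp (invW φ w) (wordComp w t) = t := by
  intro w
  induction w with
  | nil => intro _ t; rfl
  | cons g l ih =>
      intro hw t
      have hgG := hw g (by simp)
      have hl : IsWord G l := fun a ha => hw a (by simp [ha])
      rw [invW_cons]
      simp only [wordComp_append, wordComp_cons, wordComp_nil, Function.comp_apply, id_eq]
      rw [hφl g hgG (wordComp l t), ih hl t]

lemma invW_right (hφr : ∀ g ∈ G, ∀ t : ℝ, g (φ g t) = t) :
    ∀ {w : List (ℝ → ℝ)}, IsWord G w → ∀ t : ℝ,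
      wordComp w (wordComp (invW φ w) t) = t := by
  intro w
  induction w with
  | nil => intro _ t; rfl
  | cons g l ih =>
      intro hw t
      have hgG := hw g (by simp)
      have hl : IsWord G l := fun a ha => hw a (by simp [ha])
      rw [invW_cons]
      simp only [wordComp_append, wordComp_cons, wordComp_nil, Function.comp_apply, id_eq]
      rw [ih hl (φ g t), hφr g hgG t]

lemma deriv_phi (hC1 : ∀ g ∈ G, ContDiff ℝ 1 g)
    (hpos : ∀ g ∈ G, ∀ y : ℝ, 0 < deriv g y) (hφG : ∀ g ∈ G, φ g ∈ G)
    (hφl : ∀ g ∈ G, ∀ t : ℝ, φ g (g t) = t) {g : ℝ → ℝ} (hg : g ∈ G) (t : ℝ) :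
    deriv (φ g) (g t) = (deriv g t)⁻¹ := by
  have hgd : Differentiable ℝ g := (hC1 g hg).differentiable one_ne_zero
  have hφd : Differentiable ℝ (φ g) := (hC1 _ (hφG g hg)).differentiable one_ne_zero
  have hid : (fun u : ℝ => φ g (g u)) = id := funext fun u => hφl g hg u
  have h1 : deriv (φ g ∘ g) t = deriv (φ g) (g t) * deriv g t :=
    deriv_comp t hφd.differentiableAt hgd.differentiableAt
  have h2 : deriv (φ g ∘ g) t = 1 := by
    have : (φ g ∘ g) = id := hid
    rw [this]; simp
  have hne : deriv g t ≠ 0 := ne_of_gt (hpos g hg t)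
  field_simp
  rw [← h1, h2]

end Inv

section Fin

variable {G : Finset (ℝ → ℝ)}

lemma words_len_finite (G : Finset (ℝ → ℝ)) :
    ∀ n : ℕ, {l : List (ℝ → ℝ) | IsWord G l ∧ l.length = n}.Finite := by
  intro n
  induction n with
  | zero =>
      apply Set.Finite.subset (Set.finite_singleton ([] : List (ℝ → ℝ)))
      rintro l ⟨-, hlen⟩
      simp [List.length_eq_zero_iff.1 hlen]
  | succ n ih =>
      apply Set.Finite.subset (Set.Finite.image
        (fun p : (ℝ → ℝ) × List (ℝ → ℝ) => p.1 :: p.2)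
        (Set.Finite.prod (G.finite_toSet) ih))
      rintro l ⟨hl, hlen⟩
      cases l with
      | nil => simp at hlen
      | cons g l' =>
          exact ⟨(g, l'), ⟨hl g (by simp), fun a ha => hl a (by simp [ha]), by simpa using hlen⟩, rfl⟩

lemma words_le_finite (G : Finset (ℝ → ℝ)) (n : ℕ) :
    {l : List (ℝ → ℝ) | IsWord G l ∧ l.length ≤ n}.Finite := by
  have : {l : List (ℝ → ℝ) | IsWord G l ∧ l.length ≤ n}
      ⊆ ⋃ m ∈ Finset.range (n+1), {l : List (ℝ → ℝ) | IsWord G l ∧ l.length = m} := by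
    rintro l ⟨hl, hlen⟩
    exact Set.mem_biUnion (Finset.mem_range.2 (Nat.lt_succ_of_le hlen)) ⟨hl, rfl⟩
  exact Set.Finite.subset (Set.Finite.biUnion (Finset.range (n+1)).finite_toSet
    (fun m _ => words_len_finite G m)) this

lemma words_countable (G : Finset (ℝ → ℝ)) :
    {l : List (ℝ → ℝ) | IsWord G l}.Countable := by
  have : {l : List (ℝ → ℝ) | IsWord G l}
      = ⋃ n : ℕ, {l : List (ℝ → ℝ) | IsWord G l ∧ l.length = n} := by
    ext l; simp only [Set.mem_iUnion, Set.mem_setOf_eq]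
    exact ⟨fun h => ⟨l.length, h, rfl⟩, fun ⟨n, h, _⟩ => h⟩
  rw [this]
  exact Set.countable_iUnion (fun n => (words_len_finite G n).countable)

lemma maxExp_spec (G : Finset (ℝ → ℝ)) (n : ℕ) (x : ℝ) :
    (∃ w : List (ℝ → ℝ), IsWord G w ∧ w.length ≤ n ∧ maxExp G n x = deriv (wordComp w) x)
    ∧ (∀ w : List (ℝ → ℝ), IsWord G w → w.length ≤ n →
        deriv (wordComp w) x ≤ maxExp G n x) := by
  set S : Set ℝ := {d : ℝ | ∃ w : List (ℝ → ℝ), IsWord G w ∧ w.length ≤ n ∧ d = deriv (wordComp w) x} with hS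
  have hfin : S.Finite := by
    apply Set.Finite.subset (Set.Finite.image (fun w => deriv (wordComp w) x) (words_le_finite G n))
    rintro d ⟨w, hw, hlen, rfl⟩
    exact ⟨w, ⟨hw, hlen⟩, rfl⟩
  have hne : S.Nonempty := ⟨deriv (wordComp []) x, [], by intro g hg; simp at hg, by simp, rfl⟩
  constructor
  · have := Set.Nonempty.csSup_mem hne hfin
    obtain ⟨w, hw, hlen, hd⟩ := this
    exact ⟨w, hw, hlen, hd⟩
  · intro w hw hlen
    exact le_csSup hfin.bddAbove ⟨w, hw, hlen, rfl⟩

lemma one_le_maxExp (G : Finset (ℝ → ℝ)) (n : ℕ) (x : ℝ) : 1 ≤ maxExp G n x := by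
  have h := (maxExp_spec G n x).2 [] (by intro g hg; simp at hg) (by simp)
  simpa [wordComp_nil] using h

end Fin

end ResilientAux

namespace ResilientAux

section Pliss

variable {G : Finset (ℝ → ℝ)}

lemma pliss (hC1 : ∀ g ∈ G, ContDiff ℝ 1 g)
    (hpos : ∀ g ∈ G, ∀ y : ℝ, 0 < deriv g y)
    {lam : ℝ} (hlam : 0 < lam) {n : ℕ}
    {w : List (ℝ → ℝ)} (hw : IsWord G w) (hlen : w.length ≤ n) {x : ℝ}
    (hD : Real.exp (lam * n) ≤ deriv (wordComp w) x) :
    ∃ v : List (ℝ → ℝ), IsWord G v ∧ v.length ≤ n ∧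
      (∀ s t, v = s ++ t →
        Real.exp (2 * (lam/4) * s.length) ≤ deriv (wordComp s) (wordComp t x)) ∧
      Real.exp (lam * n / 2) ≤ deriv (wordComp v) x := by
  classical
  set a : ℝ := lam / 4 with ha_def
  set k := w.length with hk
  obtain ⟨i, hi_mem, hi_max⟩ := Finset.exists_max_image (Finset.range (k+1))
    (fun i => Real.log (deriv (wordComp (w.drop i)) x) + 2*a*i) ⟨0, by simp⟩
  have hik : i ≤ k := Nat.lt_succ_iff.mp (Finset.mem_range.1 hi_mem)
  have hvw : IsWord G (w.drop i) := fun g hg => hw g (List.drop_subset i w hg)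
  have hvlen : (w.drop i).length ≤ n := by
    rw [List.length_drop]; omega
  have hpdw : 0 < deriv (wordComp w) x := deriv_word_pos hC1 hpos hw x
  have hpdv : 0 < deriv (wordComp (w.drop i)) x := deriv_word_pos hC1 hpos hvw x
  have hlogw : lam * n ≤ Real.log (deriv (wordComp w) x) :=
    (Real.le_log_iff_exp_le hpdw).2 hD
  have hT0 : Real.log (deriv (wordComp w) x)
      ≤ Real.log (deriv (wordComp (w.drop i)) x) + 2*a*i := by
    have := hi_max 0 (by simp)
    simpa using this
  have hi_le_n : (i : ℝ) ≤ (n : ℝ) := by exact_mod_cast le_trans hik hlen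
  have h2ai : 2*a*(i:ℝ) ≤ 2*a*(n:ℝ) := by
    apply mul_le_mul_of_nonneg_left hi_le_n
    rw [ha_def]; positivity
  have hlogv : lam * n / 2 ≤ Real.log (deriv (wordComp (w.drop i)) x) := by
    rw [ha_def] at hT0 h2ai
    linarith
  refine ⟨w.drop i, hvw, hvlen, ?_, (Real.le_log_iff_exp_le hpdv).1 hlogv⟩
  intro s t hst
  have hlen_drop : (w.drop i).length = k - i := by rw [List.length_drop]
  have hslen : i + s.length ≤ k := by
    have hsum : s.length + t.length = k - i := by
      rw [← List.length_append, ← hst, hlen_drop]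
    omega
  have hdropj : w.drop (i + s.length) = t := by
    rw [← List.drop_drop, hst, List.drop_left]
  have hsw : IsWord G s := fun g hg => hvw g (by rw [hst]; exact List.mem_append_left _ hg)
  have htw : IsWord G t := fun g hg => hvw g (by rw [hst]; exact List.mem_append_right _ hg)
  have hpds : 0 < deriv (wordComp s) (wordComp t x) :=
    deriv_word_pos hC1 hpos hsw _
  have hpdt : 0 < deriv (wordComp t) x := deriv_word_pos hC1 hpos htw x
  have hTj : Real.log (deriv (wordComp (w.drop (i + s.length))) x) + 2*a*(i + s.length)
      ≤ Real.log (deriv (wordComp (w.drop i)) x) + 2*a*i := by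
    have := hi_max (i + s.length) (Finset.mem_range.2 (Nat.lt_succ_of_le hslen))
    simpa using this
  rw [hdropj] at hTj
  have happ : deriv (wordComp (w.drop i)) x
      = deriv (wordComp s) (wordComp t x) * deriv (wordComp t) x := by
    rw [hst]; exact deriv_word_append hC1 hsw htw x
  rw [happ, Real.log_mul hpds.ne' hpdt.ne'] at hTj
  have hfinal : 2*a*(s.length:ℝ) ≤ Real.log (deriv (wordComp s) (wordComp t x)) := by
    linarith
  exact (Real.le_log_iff_exp_le hpds).1 hfinal

end Pliss

section Contraction

variable {G : Finset (ℝ → ℝ)}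

lemma contraction_lemma
    (hC1 : ∀ g ∈ G, ContDiff ℝ 1 g)
    (hpos : ∀ g ∈ G, ∀ y : ℝ, 0 < deriv g y)
    (φ : (ℝ → ℝ) → (ℝ → ℝ))
    (hφG : ∀ g ∈ G, φ g ∈ G)
    (hφl : ∀ g ∈ G, ∀ t : ℝ, φ g (g t) = t)
    {a δ : ℝ} (ha : 0 < a) (hδ : 0 < δ)
    (hmod : ∀ g ∈ G, ∀ c ξ : ℝ, |ξ - c| ≤ δ → deriv g ξ ≤ Real.exp a * deriv g c) :
    ∀ (u v : List (ℝ → ℝ)) (x z z' : ℝ), IsWord G u → IsWord G v →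
      (∀ s t, u = s ++ t →
        Real.exp (2 * a * s.length) ≤ deriv (wordComp s) (wordComp (t ++ v) x)) →
      |z - wordComp (u ++ v) x| ≤ δ → |z' - wordComp (u ++ v) x| ≤ δ →
      |wordComp (invW φ u) z - wordComp (invW φ u) z'|
        ≤ (Real.exp (a * u.length) / deriv (wordComp u) (wordComp v x)) * |z - z'| := by
  intro u
  induction u using List.reverseRecOn with
  | nil =>
      intro v x z z' _ _ _ _ _
      simp [invW_nil, wordComp_nil]
  | append_singleton s g ih =>
      intro v x z z' hu hv hP hz hz'
      have hgG : g ∈ G := hu g (by simp)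
      have hs : IsWord G s := fun b hb => hu b (by simp [hb])
      have hgv : IsWord G (g :: v) := by
        intro b hb
        rcases List.mem_cons.1 hb with h | h
        · rw [h]; exact hgG
        · exact hv b h
      have hcent : wordComp ((s ++ [g]) ++ v) x = wordComp (s ++ (g :: v)) x := by
        rw [List.append_assoc, List.singleton_append]
      have hP' : ∀ s₁ t₁, s = s₁ ++ t₁ →
          Real.exp (2*a*s₁.length) ≤ deriv (wordComp s₁) (wordComp (t₁ ++ (g::v)) x) := by
        intro s₁ t₁ h
        have := hP s₁ (t₁ ++ [g]) (by rw [h, List.append_assoc])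
        rwa [List.append_assoc, List.singleton_append] at this
      set c0 : ℝ := wordComp v x with hc0
      set c1 : ℝ := wordComp (g :: v) x with hc1
      have hc1g : c1 = g c0 := rfl
      set y : ℝ := wordComp (s ++ (g :: v)) x with hy
      have hz2 : |z - y| ≤ δ := by rw [← hcent]; exact hz
      have hz2' : |z' - y| ≤ δ := by rw [← hcent]; exact hz'
      have hyy : |y - y| ≤ δ := by simp [le_of_lt hδ]
      have key := ih (g::v) x z z' hs hgv hP' hz2 hz2'
      have keyz := ih (g::v) x z y hs hgv hP' hz2 hyy
      have keyz' := ih (g::v) x z' y hs hgv hP' hz2' hyy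
      have hpds : 0 < deriv (wordComp s) c1 := deriv_word_pos hC1 hpos hs c1
      have hLs : Real.exp (a * s.length) / deriv (wordComp s) c1 ≤ 1 := by
        rw [div_le_one hpds]
        calc Real.exp (a * s.length) ≤ Real.exp (2*a*s.length) := by
              apply Real.exp_le_exp.2
              have : (0:ℝ) ≤ (s.length : ℝ) := Nat.cast_nonneg _
              nlinarith
          _ ≤ deriv (wordComp s) (wordComp ([] ++ (g::v)) x) := hP' s [] (by simp)
          _ = deriv (wordComp s) c1 := by rw [List.nil_append]
      have hWinv_cent : wordComp (invW φ s) y = c1 := by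
        rw [hy, wordComp_append]
        simp only [Function.comp_apply]
        exact invW_left φ hφl hs (wordComp (g::v) x)
      have hLsnn : 0 ≤ Real.exp (a * s.length) / deriv (wordComp s) c1 := by positivity
      have hζz : |wordComp (invW φ s) z - c1| ≤ δ := by
        rw [← hWinv_cent]
        calc |wordComp (invW φ s) z - wordComp (invW φ s) y|
            ≤ (Real.exp (a * s.length) / deriv (wordComp s) c1) * |z - y| := keyz
          _ ≤ 1 * δ := mul_le_mul hLs hz2 (abs_nonneg _) zero_le_one
          _ = δ := one_mul δ
      have hζz' : |wordComp (invW φ s) z' - c1| ≤ δ := by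
        rw [← hWinv_cent]
        calc |wordComp (invW φ s) z' - wordComp (invW φ s) y|
            ≤ (Real.exp (a * s.length) / deriv (wordComp s) c1) * |z' - y| := keyz'
          _ ≤ 1 * δ := mul_le_mul hLs hz2' (abs_nonneg _) zero_le_one
          _ = δ := one_mul δ
      have hφgG := hφG g hgG
      have hφgd : Differentiable ℝ (φ g) := (hC1 _ hφgG).differentiable one_ne_zero
      have hstep : |φ g (wordComp (invW φ s) z) - φ g (wordComp (invW φ s) z')|
          ≤ (Real.exp a * deriv (φ g) c1) * |wordComp (invW φ s) z - wordComp (invW φ s) z'| := by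
        apply letter_lip_ball (convex_closedBall c1 δ) hφgd
          (fun ξ hξ => hmod (φ g) hφgG c1 ξ (by
            rw [Metric.mem_closedBall, Real.dist_eq] at hξ; exact hξ))
          (fun ξ => hpos _ hφgG ξ)
        · rw [Metric.mem_closedBall, Real.dist_eq]; exact hζz
        · rw [Metric.mem_closedBall, Real.dist_eq]; exact hζz'
      have hdφ : deriv (φ g) c1 = (deriv g c0)⁻¹ := by
        rw [hc1g]
        exact deriv_phi φ hC1 hpos hφG hφl hgG c0
      have hcomp : wordComp (invW φ (s ++ [g]))
          = φ g ∘ wordComp (invW φ s) := by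
        rw [invW_concat, wordComp_cons]
      have hgpos : 0 < deriv g c0 := hpos g hgG c0
      have happ : deriv (wordComp (s ++ [g])) c0
          = deriv (wordComp s) c1 * deriv g c0 := by
        have := deriv_word_append hC1 hs (fun b hb => by
            rw [List.mem_singleton.1 hb]; exact hgG) c0
        rw [this, wordComp_singleton, ← hc1g]
      calc |wordComp (invW φ (s ++ [g])) z - wordComp (invW φ (s ++ [g])) z'|
          = |φ g (wordComp (invW φ s) z) - φ g (wordComp (invW φ s) z')| := by
            rw [hcomp]; rfl
        _ ≤ (Real.exp a * deriv (φ g) c1) * |wordComp (invW φ s) z - wordComp (invW φ s) z'| := hstep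
        _ ≤ (Real.exp a * deriv (φ g) c1) *
              ((Real.exp (a * s.length) / deriv (wordComp s) c1) * |z - z'|) := by
            apply mul_le_mul_of_nonneg_left key
            rw [hdφ]; positivity
        _ = (Real.exp (a * (s ++ [g]).length) / deriv (wordComp (s ++ [g])) c0) * |z - z'| := by
            rw [hdφ, happ, List.length_append, List.length_singleton]
            have hexp : Real.exp (a * (s.length + 1 : ℕ)) = Real.exp a * Real.exp (a * s.length) := by
              rw [← Real.exp_add]
              congr 1
              push_cast
              ring
            rw [hexp]
            field_simp
  
end Contraction

end ResilientAux

namespace ResilientAux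

lemma banach_ball {F : ℝ → ℝ} {c r κ : ℝ} (hr : 0 ≤ r) (hκ0 : 0 ≤ κ) (hκ : κ < 1)
    (hmap : ∀ z ∈ Metric.closedBall c r, F z ∈ Metric.closedBall c r)
    (hlip : ∀ z ∈ Metric.closedBall c r, ∀ z' ∈ Metric.closedBall c r,
      |F z - F z'| ≤ κ * |z - z'|) :
    ∃ u ∈ Metric.closedBall c r, F u = u ∧
      (∀ w ∈ Metric.closedBall c r, Filter.Tendsto (fun ℓ : ℕ => F^[ℓ] w) Filter.atTop (𝓝 u)) ∧
      (∀ u' ∈ Metric.closedBall c r, F u' = u' → u' = u) := by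
  have hmem : ∀ ℓ : ℕ, F^[ℓ] c ∈ Metric.closedBall c r := by
    intro ℓ
    induction ℓ with
    | zero => simp [Metric.mem_closedBall, hr]
    | succ m ih => rw [Function.iterate_succ_apply']; exact hmap _ ih
  have hstep : ∀ ℓ : ℕ, dist (F^[ℓ] c) (F^[ℓ+1] c) ≤ (2*r) * κ ^ ℓ := by
    intro ℓ
    induction ℓ with
    | zero =>
        have h1 := hmem 1
        rw [Metric.mem_closedBall, Real.dist_eq] at h1
        simp only [Function.iterate_zero_apply, zero_add, Function.iterate_one, pow_zero,
          mul_one]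
        rw [Real.dist_eq]
        calc |c - F c| = |F c - c| := abs_sub_comm _ _
          _ ≤ r := by simpa using h1
          _ ≤ 2*r := by linarith
    | succ m ih =>
        rw [Function.iterate_succ_apply', Function.iterate_succ_apply']
        have h1 := hmem m
        have h2 := hmem (m+1)
        calc dist (F (F^[m] c)) (F (F^[m+1] c))
            = |F (F^[m] c) - F (F^[m+1] c)| := Real.dist_eq _ _
          _ ≤ κ * |F^[m] c - F^[m+1] c| := hlip _ h1 _ h2
          _ = κ * dist (F^[m] c) (F^[m+1] c) := by rw [Real.dist_eq]
          _ ≤ κ * ((2*r) * κ ^ m) := by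
              apply mul_le_mul_of_nonneg_left ih hκ0
          _ = (2*r) * κ ^ (m+1) := by ring
  have hcauchy : CauchySeq (fun ℓ : ℕ => F^[ℓ] c) :=
    cauchySeq_of_le_geometric κ (2*r) hκ hstep
  obtain ⟨u, hu⟩ := cauchySeq_tendsto_of_complete hcauchy
  have humem : u ∈ Metric.closedBall c r :=
    Metric.isClosed_closedBall.mem_of_tendsto hu (Filter.Eventually.of_forall hmem)
  have hfix : F u = u := by
    have h2 : Filter.Tendsto (fun ℓ : ℕ => F^[ℓ+1] c) Filter.atTop (𝓝 u) :=
      hu.comp (Filter.tendsto_add_atTop_nat 1)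
    have h3 : Filter.Tendsto (fun ℓ : ℕ => F (F^[ℓ] c)) Filter.atTop (𝓝 (F u)) := by
      rw [tendsto_iff_dist_tendsto_zero]
      have hb : ∀ ℓ : ℕ, dist (F (F^[ℓ] c)) (F u) ≤ κ * dist (F^[ℓ] c) u := by
        intro ℓ
        rw [Real.dist_eq, Real.dist_eq]
        exact hlip _ (hmem ℓ) _ humem
      have h0 : Filter.Tendsto (fun ℓ : ℕ => κ * dist (F^[ℓ] c) u) Filter.atTop (𝓝 0) := by
        have := (tendsto_iff_dist_tendsto_zero.1 hu).const_mul κ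
        simpa using this
      exact squeeze_zero (fun ℓ => dist_nonneg) hb h0
    have h4 : Filter.Tendsto (fun ℓ : ℕ => F^[ℓ+1] c) Filter.atTop (𝓝 (F u)) := by
      have : (fun ℓ : ℕ => F (F^[ℓ] c)) = fun ℓ : ℕ => F^[ℓ+1] c := by
        funext ℓ; rw [Function.iterate_succ_apply']
      rwa [this] at h3
    exact tendsto_nhds_unique h4 h2
  refine ⟨u, humem, hfix, ?_, ?_⟩
  · intro w hw
    have hwmem : ∀ ℓ : ℕ, F^[ℓ] w ∈ Metric.closedBall c r := by
      intro ℓ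
      induction ℓ with
      | zero => simpa using hw
      | succ m ih => rw [Function.iterate_succ_apply']; exact hmap _ ih
    have hd : ∀ ℓ : ℕ, dist (F^[ℓ] w) u ≤ κ ^ ℓ * dist w u := by
      intro ℓ
      induction ℓ with
      | zero => simp
      | succ m ih =>
          rw [Function.iterate_succ_apply']
          calc dist (F (F^[m] w)) u = dist (F (F^[m] w)) (F u) := by rw [hfix]
            _ = |F (F^[m] w) - F u| := Real.dist_eq _ _
            _ ≤ κ * |F^[m] w - u| := hlip _ (hwmem m) _ humem
            _ = κ * dist (F^[m] w) u := by rw [Real.dist_eq]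
            _ ≤ κ * (κ ^ m * dist w u) := mul_le_mul_of_nonneg_left ih hκ0
            _ = κ ^ (m+1) * dist w u := by ring
    rw [tendsto_iff_dist_tendsto_zero]
    apply squeeze_zero (fun ℓ => dist_nonneg) hd
    have := (tendsto_pow_atTop_nhds_zero_of_lt_one hκ0 hκ).mul_const (dist w u)
    simpa using this
  · intro u' hu'mem hu'fix
    by_contra hne
    have hdpos : 0 < dist u' u := dist_pos.2 hne
    have : dist u' u ≤ κ * dist u' u := by
      calc dist u' u = dist (F u') (F u) := by rw [hu'fix, hfix]
        _ = |F u' - F u| := Real.dist_eq _ _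
        _ ≤ κ * |u' - u| := hlip _ hu'mem _ humem
        _ = κ * dist u' u := by rw [Real.dist_eq]
    nlinarith

lemma abs_deriv_le_of_lip {F : ℝ → ℝ} {u κ r : ℝ} (hr : 0 < r) (hκ0 : 0 ≤ κ)
    (hF : DifferentiableAt ℝ F u)
    (hlip : ∀ z : ℝ, |z - u| ≤ r → |F z - F u| ≤ κ * |z - u|) : |deriv F u| ≤ κ := by
  have hd := hF.hasDerivAt
  rw [hasDerivAt_iff_tendsto_slope] at hd
  have habs : Filter.Tendsto (fun z => |slope F u z|) (𝓝[≠] u) (𝓝 |deriv F u|) := hd.abs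
  apply le_of_tendsto habs
  have hball : Metric.closedBall u r ∈ 𝓝 u := Metric.closedBall_mem_nhds u hr
  have : ∀ᶠ z in 𝓝[≠] u, z ∈ Metric.closedBall u r ∧ z ≠ u := by
    apply Filter.Eventually.and
    · exact eventually_nhdsWithin_of_eventually_nhds hball
    · exact eventually_mem_nhdsWithin
  filter_upwards [this] with z hz
  obtain ⟨hz1, hz2⟩ := hz
  rw [Metric.mem_closedBall, Real.dist_eq] at hz1
  have hzu : z - u ≠ 0 := sub_ne_zero.2 hz2
  rw [slope_def_field]
  rw [div_eq_mul_inv, abs_mul, abs_inv]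
  rw [show F z - F u = F z - F u from rfl]
  have h1 : |F z - F u| ≤ κ * |z - u| := hlip z hz1
  have h2 : 0 < |z - u| := abs_pos.2 hzu
  calc |F z - F u| * |z - u|⁻¹ ≤ (κ * |z - u|) * |z - u|⁻¹ := by
        apply mul_le_mul_of_nonneg_right h1 (by positivity)
    _ = κ := by field_simp

lemma unif_delta {G : Finset (ℝ → ℝ)}
    (hpos : ∀ g ∈ G, ∀ y : ℝ, 0 < deriv g y)
    (hUC : ∀ g ∈ G, UniformContinuous fun y : ℝ => Real.log (deriv g y))
    {a : ℝ} (ha : 0 < a) :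
    ∃ δ : ℝ, 0 < δ ∧ ∀ g ∈ G, ∀ c ξ : ℝ, |ξ - c| ≤ δ →
      deriv g ξ ≤ Real.exp a * deriv g c := by
  classical
  have key : ∀ s : Finset (ℝ → ℝ), (∀ g ∈ s, g ∈ G) →
      ∃ δ : ℝ, 0 < δ ∧ ∀ g ∈ s, ∀ c ξ : ℝ, |ξ - c| ≤ δ →
        deriv g ξ ≤ Real.exp a * deriv g c := by
    intro s
    induction s using Finset.induction_on with
    | empty => intro _; exact ⟨1, one_pos, fun g hg => by simp at hg⟩
    | insert g s' hgnotin ih =>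
        intro hsub
        obtain ⟨δ₁, hδ₁, h1⟩ := ih (fun b hb => hsub b (Finset.mem_insert_of_mem hb))
        have hgG : g ∈ G := hsub g (Finset.mem_insert_self g s')
        obtain ⟨δ₂, hδ₂, h2⟩ := (Metric.uniformContinuous_iff.1 (hUC g hgG)) a ha
        refine ⟨min δ₁ (δ₂/2), by positivity, ?_⟩
        intro b hb c ξ hξ
        rcases Finset.mem_insert.1 hb with rfl | hb'
        · have hdist : dist ξ c < δ₂ := by
            rw [Real.dist_eq]
            calc |ξ - c| ≤ min δ₁ (δ₂/2) := hξ
              _ ≤ δ₂/2 := min_le_right _ _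
              _ < δ₂ := by linarith
          have := h2 hdist
          rw [Real.dist_eq] at this
          have hlog : Real.log (deriv b ξ) - Real.log (deriv b c) ≤ a := by
            have := abs_le.1 (le_of_lt this)
            linarith [this.2]
          have hpξ := hpos b hgG ξ
          have hpc := hpos b hgG c
          calc deriv b ξ = Real.exp (Real.log (deriv b ξ)) := (Real.exp_log hpξ).symm
            _ ≤ Real.exp (a + Real.log (deriv b c)) := by
                apply Real.exp_le_exp.2; linarith
            _ = Real.exp a * deriv b c := by rw [Real.exp_add, Real.exp_log hpc]
        · exact h1 b hb' c ξ (le_trans hξ (min_le_left _ _))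
  obtain ⟨δ, hδ, h⟩ := key G (fun g hg => hg)
  exact ⟨δ, hδ, h⟩

lemma infinite_exists_gt {s : Set ℕ} (hs : s.Infinite) (m : ℕ) : ∃ b ∈ s, m < b := by
  by_contra h
  push_neg at h
  exact hs (Set.Finite.subset (Set.finite_Iic m) (fun b hb => Set.mem_Iic.2 (h b hb)))

end ResilientAux

open ResilientAux in
set_option maxHeartbeats 2000000 in
/-- If the hyperbolic set `E⁺ = {x | λ_*(x) > 0}` has positive Lebesgue measure, then
`G` has a hyperbolic resilient point. -/
theorem positive_measure_hyperbolic_set_implies_hyperbolic_resilient_point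
    (G : Finset (ℝ → ℝ))
    (hC1 : ∀ g ∈ G, ContDiff ℝ 1 g)
    (hpos : ∀ g ∈ G, ∀ y : ℝ, 0 < deriv g y)
    (hinv : ∀ g ∈ G, ∃ h ∈ G, (∀ x : ℝ, h (g x) = x) ∧ (∀ x : ℝ, g (h x) = x))
    (C₀ : ℝ) (hC₀ : 1 ≤ C₀)
    (hbound : ∀ g ∈ G, ∀ y : ℝ, 1 / C₀ ≤ deriv g y ∧ deriv g y ≤ C₀)
    (hUC : ∀ g ∈ G, UniformContinuous fun y : ℝ => Real.log (deriv g y))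
    (K : Set ℝ) (hK : IsCompact K)
    (hKorbit : ∀ x : ℝ, 0 < expExponent G x →
      ∀ w : List (ℝ → ℝ), IsWord G w → wordComp w x ∈ K)
    (hmeasure : 0 < volume {x : ℝ | 0 < expExponent G x}) :
    ∃ (u : ℝ) (H R : List (ℝ → ℝ)), IsWord G H ∧ IsWord G R ∧
      wordComp H u = u ∧ deriv (wordComp H) u < 1 ∧ wordComp R u ≠ u ∧
      Tendsto (fun ℓ : ℕ => (wordComp H)^[ℓ] (wordComp R u)) atTop (𝓝 u) := by
  classical
  -- Step A : decompose the hyperbolic set along rational rates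
  have hdecomp : ∀ x : ℝ, 0 < expExponent G x → ∃ q : ℚ, 0 < (q:ℝ) ∧
      ∃ᶠ n in atTop, ∃ w : List (ℝ → ℝ), IsWord G w ∧ w.length ≤ n ∧
        Real.exp ((q:ℝ) * n) ≤ deriv (wordComp w) x := by
    intro x hx
    rw [expExponent] at hx
    obtain ⟨q, hq0, hq1, hq2⟩ := ENNReal.lt_iff_exists_rat_btwn.1 hx
    have hqpos : 0 < (q:ℝ) := by
      by_contra h
      push_neg at h
      rw [Real.toNNReal_of_nonpos h] at hq1
      simp at hq1
    refine ⟨q, hqpos, ?_⟩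
    have hfreq : ∃ᶠ n in atTop,
        ((((q:ℝ)).toNNReal : NNReal) : ENNReal)
          < ENNReal.ofReal (Real.log (maxExp G n x) / n) := by
      by_contra h
      rw [Filter.not_frequently] at h
      have hle : Filter.limsup
          (fun n : ℕ => ENNReal.ofReal (Real.log (maxExp G n x) / n)) Filter.atTop
          ≤ (((q:ℝ).toNNReal : NNReal) : ENNReal) := by
        apply Filter.limsup_le_of_le ?_ ?_
        · isBoundedDefault
        · filter_upwards [h] with n hn
          exact not_lt.1 hn
      exact absurd (lt_of_lt_of_le hq2 hle) (lt_irrefl _)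
    apply hfreq.mono
    rintro n hn
    have hofr : ((((q:ℝ)).toNNReal : NNReal) : ENNReal) = ENNReal.ofReal (q:ℝ) := rfl
    rw [hofr] at hn
    have hqlt : (q:ℝ) < Real.log (maxExp G n x) / n :=
      (ENNReal.ofReal_lt_ofReal_iff_of_nonneg (le_of_lt hqpos)).1 hn
    have hn0 : 0 < n := by
      by_contra h0
      push_neg at h0
      interval_cases n
      simp at hqlt
      linarith
    have hnR : (0:ℝ) < (n:ℝ) := by exact_mod_cast hn0
    have hμ1 : (1:ℝ) ≤ maxExp G n x := one_le_maxExp G n x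
    have hμpos : (0:ℝ) < maxExp G n x := lt_of_lt_of_le zero_lt_one hμ1
    have hqn : (q:ℝ) * n ≤ Real.log (maxExp G n x) := by
      rw [div_eq_mul_inv] at hqlt
      have := (lt_div_iff₀ hnR).1 (by rw [div_eq_mul_inv]; exact hqlt)
      linarith
    have hexp : Real.exp ((q:ℝ) * n) ≤ maxExp G n x :=
      (Real.le_log_iff_exp_le hμpos).1 hqn
    obtain ⟨w, hw, hlen, heq⟩ := (maxExp_spec G n x).1
    exact ⟨w, hw, hlen, by rw [← heq]; exact hexp⟩
  -- Step B : one rational rate has an uncountable set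
  have hex : ∃ q : ℚ, 0 < (q:ℝ) ∧
      ¬ ({x : ℝ | ∃ᶠ n in atTop, ∃ w : List (ℝ → ℝ), IsWord G w ∧ w.length ≤ n ∧
          Real.exp ((q:ℝ) * n) ≤ deriv (wordComp w) x}).Countable := by
    by_contra h
    push_neg at h
    have hcnt : ({x : ℝ | 0 < expExponent G x}).Countable := by
      have hsub : {x : ℝ | 0 < expExponent G x}
          ⊆ ⋃ q ∈ {q : ℚ | 0 < (q:ℝ)},
            {x : ℝ | ∃ᶠ n in atTop, ∃ w : List (ℝ → ℝ), IsWord G w ∧ w.length ≤ n ∧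
              Real.exp ((q:ℝ) * n) ≤ deriv (wordComp w) x} := by
        intro x hx
        obtain ⟨q, hq1, hq2⟩ := hdecomp x hx
        exact Set.mem_biUnion hq1 hq2
      apply Set.Countable.mono hsub
      apply Set.Countable.biUnion (Set.to_countable _)
      intro q hq
      exact h q hq
    rw [hcnt.measure_zero volume] at hmeasure
    exact lt_irrefl _ hmeasure
  obtain ⟨q, hq, hAunc⟩ := hex
  set lam : ℝ := (q:ℝ) with hlam_def
  have hlam : 0 < lam := hq
  set a : ℝ := lam/4 with ha_def
  have ha : 0 < a := by rw [ha_def]; positivity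
  set A : Set ℝ := {x : ℝ | ∃ᶠ n in atTop, ∃ w : List (ℝ → ℝ), IsWord G w ∧ w.length ≤ n ∧
      Real.exp (lam * n) ≤ deriv (wordComp w) x} with hA_def
  -- Step C : A ⊆ E
  have hAE : ∀ x ∈ A, 0 < expExponent G x := by
    intro x hx
    have hx' : ∃ᶠ n in atTop, ∃ w : List (ℝ → ℝ), IsWord G w ∧ w.length ≤ n ∧
        Real.exp (lam * n) ≤ deriv (wordComp w) x := hx
    have hfreq2 : ∃ᶠ n in atTop,
        ENNReal.ofReal lam ≤ ENNReal.ofReal (Real.log (maxExp G n x) / n) := by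
      apply (hx'.and_eventually (Filter.eventually_ge_atTop 1)).mono
      rintro n ⟨⟨w, hw, hlen, hD⟩, hn1⟩
      have hnR : (0:ℝ) < (n:ℝ) := by exact_mod_cast hn1
      have hle := (maxExp_spec G n x).2 w hw hlen
      have hμpos : (0:ℝ) < maxExp G n x :=
        lt_of_lt_of_le (Real.exp_pos _) (le_trans hD hle)
      have hlog : lam * n ≤ Real.log (maxExp G n x) :=
        (Real.le_log_iff_exp_le hμpos).2 (le_trans hD hle)
      have : lam ≤ Real.log (maxExp G n x) / n := by
        rw [le_div_iff₀ hnR]; linarith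
      exact ENNReal.ofReal_le_ofReal this
    have hlim := Filter.le_limsup_of_frequently_le hfreq2
    rw [expExponent]
    calc (0:ENNReal) < ENNReal.ofReal lam := ENNReal.ofReal_pos.2 hlam
      _ ≤ _ := hlim
  -- Step D : inverses
  have hφex : ∀ g : ℝ → ℝ, ∃ h : ℝ → ℝ,
      g ∈ G → (h ∈ G ∧ (∀ t : ℝ, h (g t) = t) ∧ (∀ t : ℝ, g (h t) = t)) := by
    intro g
    by_cases hg : g ∈ G
    · obtain ⟨h, hhG, h1, h2⟩ := hinv g hg
      exact ⟨h, fun _ => ⟨hhG, h1, h2⟩⟩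
    · exact ⟨id, fun hgg => absurd hgg hg⟩
  choose φ hφ using hφex
  have hφG : ∀ g ∈ G, φ g ∈ G := fun g hg => (hφ g hg).1
  have hφl : ∀ g ∈ G, ∀ t : ℝ, φ g (g t) = t := fun g hg => (hφ g hg).2.1
  -- Step E : uniform modulus
  obtain ⟨δ, hδ0, hmod⟩ := unif_delta hpos hUC ha
  -- Step F : finite net of K
  obtain ⟨net, hnetfin, hnetcov⟩ :=
    (Metric.totallyBounded_iff.1 hK.totallyBounded) (δ/16) (by positivity)
  -- Step G : scales
  set SS : ℝ → Set ℕ := fun x => {n : ℕ | 1 ≤ n ∧ ∃ w : List (ℝ → ℝ),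
      IsWord G w ∧ w.length ≤ n ∧ Real.exp (lam * n) ≤ deriv (wordComp w) x} with hSS_def
  have hSSinf : ∀ x ∈ A, (SS x).Infinite := by
    intro x hx
    have hx' : ∃ᶠ n in atTop, ∃ w : List (ℝ → ℝ), IsWord G w ∧ w.length ≤ n ∧
        Real.exp (lam * n) ≤ deriv (wordComp w) x := hx
    have h1 : ∃ᶠ n in atTop, (1 ≤ n ∧ ∃ w : List (ℝ → ℝ), IsWord G w ∧ w.length ≤ n ∧
        Real.exp (lam * n) ≤ deriv (wordComp w) x) :=
      (hx'.and_eventually (Filter.eventually_ge_atTop 1)).mono (fun n h => ⟨h.2, h.1⟩)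
    exact Nat.frequently_atTop_iff_infinite.1 h1
  -- Step H : Pliss words
  have hVex : ∀ x ∈ A, ∀ n ∈ SS x, ∃ v : List (ℝ → ℝ), IsWord G v ∧ v.length ≤ n ∧
      (∀ s t, v = s ++ t →
        Real.exp (2*a*s.length) ≤ deriv (wordComp s) (wordComp t x)) ∧
      Real.exp (lam * n / 2) ≤ deriv (wordComp v) x := by
    intro x _ n hn
    obtain ⟨h1n, w, hw, hlen, hD⟩ := hn
    obtain ⟨v, h1, h2, h3, h4⟩ := pliss hC1 hpos hlam hw hlen hD
    refine ⟨v, h1, h2, ?_, h4⟩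
    intro s t hst
    rw [ha_def]
    exact h3 s t hst
  choose! V hV1 hV2 hV3 hV4 using hVex
  have hyK : ∀ x ∈ A, ∀ n ∈ SS x, wordComp (V x n) x ∈ K :=
    fun x hx n hn => hKorbit x (hAE x hx) _ (hV1 x hx n hn)
  -- Step I : cells
  have hcellex : ∀ x ∈ A, ∃ z ∈ net,
      {n : ℕ | n ∈ SS x ∧ wordComp (V x n) x ∈ Metric.ball z (δ/16)}.Infinite := by
    intro x hx
    by_contra h
    push_neg at h
    have hsub : SS x ⊆ ⋃ z ∈ net,
        {n : ℕ | n ∈ SS x ∧ wordComp (V x n) x ∈ Metric.ball z (δ/16)} := by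
      intro n hn
      have hyn := hyK x hx n hn
      have hc := hnetcov hyn
      rw [Set.mem_iUnion₂] at hc
      obtain ⟨z, hz, hball⟩ := hc
      exact Set.mem_biUnion hz ⟨hn, hball⟩
    refine (hSSinf x hx) (Set.Finite.subset (Set.Finite.biUnion hnetfin
      (fun z hz => (h z hz))) hsub)
  choose! zf hzf1 hzf2 using hcellex
  set CS : ℝ → Set ℕ := fun x =>
    {n : ℕ | n ∈ SS x ∧ wordComp (V x n) x ∈ Metric.ball (zf x) (δ/16)} with hCS_def
  set n1 : ℝ → ℕ := fun x => sInf (CS x) with hn1_def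
  have hn1mem : ∀ x ∈ A, n1 x ∈ CS x := fun x hx => Nat.sInf_mem (hzf2 x hx).nonempty
  -- Step J : partition
  have hkey : ∃ i : ℝ × ℕ × List (ℝ → ℝ),
      ¬ (A ∩ {x : ℝ | (zf x, n1 x, V x (n1 x)) = i}).Countable := by
    by_contra h
    push_neg at h
    apply hAunc
    have hsub : A ⊆ ⋃ i ∈ (net ×ˢ (Set.univ : Set ℕ) ×ˢ {l : List (ℝ → ℝ) | IsWord G l}),
        (A ∩ {x : ℝ | (zf x, n1 x, V x (n1 x)) = i}) := by
      intro x hx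
      have hidx : (zf x, n1 x, V x (n1 x)) ∈
          (net ×ˢ (Set.univ : Set ℕ) ×ˢ {l : List (ℝ → ℝ) | IsWord G l}) :=
        Set.mem_prod.2 ⟨hzf1 x hx, Set.mem_prod.2
          ⟨Set.mem_univ _, hV1 x hx (n1 x) (hn1mem x hx).1⟩⟩
      exact Set.mem_biUnion hidx ⟨hx, rfl⟩
    apply Set.Countable.mono hsub
    apply Set.Countable.biUnion
    · exact hnetfin.countable.prod ((Set.countable_univ).prod (words_countable G))
    · intro i _
      exact h i
  obtain ⟨⟨zstar, nn1, N1⟩, hPunc⟩ := hkey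
  set P : Set ℝ := A ∩ {x : ℝ | (zf x, n1 x, V x (n1 x)) = (zstar, nn1, N1)} with hP_def
  have hPA : P ⊆ A := Set.inter_subset_left
  have hPfacts : ∀ x ∈ P, zf x = zstar ∧ n1 x = nn1 ∧ V x nn1 = N1 := by
    intro x hx
    have h2 := hx.2
    rw [Set.mem_setOf_eq, Prod.mk.injEq, Prod.mk.injEq] at h2
    exact ⟨h2.1, h2.2.1, by rw [← h2.2.1]; exact h2.2.2⟩
  have hPdat : ∀ x ∈ P, nn1 ∈ SS x ∧ wordComp N1 x ∈ Metric.ball zstar (δ/16) := by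
    intro x hx
    obtain ⟨h1, h2, h3⟩ := hPfacts x hx
    have hmem := hn1mem x (hPA hx)
    rw [h2] at hmem
    obtain ⟨hSSm, hball⟩ := hmem
    refine ⟨hSSm, ?_⟩
    rw [← h3, ← h1]
    exact hball
  have hPtwo : ∃ x₀ ∈ P, ∃ x₁ ∈ P, x₀ ≠ x₁ := by
    by_contra h
    push_neg at h
    exact hPunc (Set.Subsingleton.countable (fun x hx x' hx' => h x hx x' hx'))
  obtain ⟨x₀, hx₀, x₁, hx₁, hx01⟩ := hPtwo
  -- Step K : threshold
  have hT0ex : ∃ T0 : ℕ, ∀ n : ℕ, T0 ≤ n →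
      C₀ ^ nn1 * Real.exp (-(lam * n) / 4) ≤ 1/100 := by
    have heq : ∀ n : ℕ, Real.exp (-(lam * n)/4) = (Real.exp (-lam/4)) ^ n := by
      intro n
      rw [← Real.exp_nat_mul]
      congr 1
      ring
    have hgeom : Tendsto (fun n : ℕ => C₀ ^ nn1 * Real.exp (-(lam * n)/4)) atTop
        (𝓝 (C₀ ^ nn1 * 0)) := by
      apply Filter.Tendsto.const_mul
      simp only [heq]
      exact tendsto_pow_atTop_nhds_zero_of_lt_one (le_of_lt (Real.exp_pos _))
        (Real.exp_lt_one_iff.2 (by linarith))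
    rw [mul_zero] at hgeom
    have hev := hgeom.eventually (gt_mem_nhds (by norm_num : (0:ℝ) < 1/100))
    obtain ⟨T0, hT0⟩ := (Filter.eventually_atTop).1 hev
    exact ⟨T0, fun n hn => le_of_lt (hT0 n hn)⟩
  obtain ⟨T0, hT0⟩ := hT0ex
  -- Step L : second scales
  have hn2ex : ∀ x ∈ P, ∀ m : ℕ, ∃ n2 : ℕ, n2 ∈ CS x ∧ max T0 m < n2 := by
    intro x hx m
    obtain ⟨n2, hn2, hgt⟩ := infinite_exists_gt (hzf2 x (hPA hx)) (max T0 m)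
    exact ⟨n2, hn2, hgt⟩
  choose! n2f hn2cs hn2gt using hn2ex
  -- Step M : the contraction construction
  have hmain : ∀ x ∈ P, ∀ m : ℕ,
      ∃ u : ℝ, u ∈ Metric.closedBall zstar (δ/4) ∧
        wordComp (N1 ++ invW φ (V x (n2f x m))) u = u ∧
        deriv (wordComp (N1 ++ invW φ (V x (n2f x m)))) u < 1 ∧
        (∀ z ∈ Metric.closedBall zstar (δ/4),
          wordComp (N1 ++ invW φ (V x (n2f x m))) z ∈ Metric.closedBall zstar (δ/4)) ∧
        (∀ w' ∈ Metric.closedBall zstar (δ/4),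
          Tendsto (fun ℓ : ℕ => (wordComp (N1 ++ invW φ (V x (n2f x m))))^[ℓ] w')
            atTop (𝓝 u)) ∧
        (∀ u' ∈ Metric.closedBall zstar (δ/4),
          wordComp (N1 ++ invW φ (V x (n2f x m))) u' = u' → u' = u) ∧
        |x - wordComp (invW φ N1) u| ≤ δ * Real.exp (-(lam * m) / 4) := by
    intro x hx m
    have hxA : x ∈ A := hPA hx
    obtain ⟨hzfx, hn1x, hVx⟩ := hPfacts x hx
    obtain ⟨hSS1, hy1ball⟩ := hPdat x hx
    have hN1w : IsWord G N1 := hVx ▸ hV1 x hxA nn1 hSS1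
    have hlen1 : N1.length ≤ nn1 := hVx ▸ hV2 x hxA nn1 hSS1
    set n2 : ℕ := n2f x m with hn2_def
    obtain ⟨hSS2, hball2⟩ := hn2cs x hx m
    rw [hzfx] at hball2
    set N2 : List (ℝ → ℝ) := V x n2 with hN2_def
    have hN2w : IsWord G N2 := hV1 x hxA n2 hSS2
    have hlen2 : N2.length ≤ n2 := hV2 x hxA n2 hSS2
    have hP1 : ∀ s t, N2 = s ++ t →
        Real.exp (2*a*s.length) ≤ deriv (wordComp s) (wordComp t x) :=
      hV3 x hxA n2 hSS2
    have hexp2 : Real.exp (lam * n2 / 2) ≤ deriv (wordComp N2) x := hV4 x hxA n2 hSS2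
    set y2 : ℝ := wordComp N2 x with hy2_def
    have hy2ball : |y2 - zstar| ≤ δ/16 := by
      have := hball2
      rw [Metric.mem_ball, Real.dist_eq] at this
      linarith
    have hy1ball' : |wordComp N1 x - zstar| ≤ δ/16 := by
      rw [Metric.mem_ball, Real.dist_eq] at hy1ball
      linarith
    have hpd2 : 0 < deriv (wordComp N2) x := deriv_word_pos hC1 hpos hN2w x
    have hmn2 : m ≤ n2 := le_of_lt (lt_of_le_of_lt (le_max_right T0 m) (hn2gt x hx m))
    have hT0n2 : T0 ≤ n2 := le_of_lt (lt_of_le_of_lt (le_max_left T0 m) (hn2gt x hx m))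
    set κ : ℝ := C₀ ^ nn1 * Real.exp (-(lam * n2)/4) with hκ_def
    have hκpos : 0 < κ := by
      rw [hκ_def]
      have : (0:ℝ) < C₀ := by linarith
      positivity
    have hκ1 : κ ≤ 1/100 := hT0 n2 hT0n2
    have hκlt1 : κ < 1 := lt_of_le_of_lt hκ1 (by norm_num)
    -- contraction estimate for the inverse of N2
    have hCL : ∀ z z' : ℝ, z ∈ Metric.closedBall zstar (δ/2) →
        z' ∈ Metric.closedBall zstar (δ/2) →
        |wordComp (invW φ N2) z - wordComp (invW φ N2) z'|
          ≤ Real.exp (-(lam * n2)/4) * |z - z'| := by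
      intro z z' hz hz'
      rw [Metric.mem_closedBall, Real.dist_eq] at hz hz'
      have hmem1 : |z - wordComp (N2 ++ []) x| ≤ δ := by
        rw [List.append_nil]
        calc |z - wordComp N2 x| ≤ |z - zstar| + |zstar - wordComp N2 x| := abs_sub_le _ _ _
          _ ≤ δ/2 + δ/16 := by
              have : |zstar - wordComp N2 x| = |y2 - zstar| := by
                rw [hy2_def, abs_sub_comm]
              rw [this]
              linarith [hy2ball, hz]
          _ ≤ δ := by linarith
      have hmem1' : |z' - wordComp (N2 ++ []) x| ≤ δ := by
        rw [List.append_nil]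
        calc |z' - wordComp N2 x| ≤ |z' - zstar| + |zstar - wordComp N2 x| := abs_sub_le _ _ _
          _ ≤ δ/2 + δ/16 := by
              have : |zstar - wordComp N2 x| = |y2 - zstar| := by
                rw [hy2_def, abs_sub_comm]
              rw [this]
              linarith [hy2ball, hz']
          _ ≤ δ := by linarith
      have hP1' : ∀ s t, N2 = s ++ t →
          Real.exp (2*a*s.length) ≤ deriv (wordComp s) (wordComp (t ++ []) x) := by
        intro s t hst
        rw [List.append_nil]
        exact hP1 s t hst
      have hcl := contraction_lemma hC1 hpos φ hφG hφl ha hδ0 hmod N2 [] x z z'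
        hN2w (fun g hg => by simp at hg) hP1' hmem1 hmem1'
      have hwnil : wordComp ([] : List (ℝ → ℝ)) x = x := rfl
      rw [hwnil] at hcl
      have hEC : Real.exp (a * N2.length) / deriv (wordComp N2) x
          ≤ Real.exp (-(lam * n2)/4) := by
        have h1 : Real.exp (a * N2.length) ≤ Real.exp (a * n2) := by
          apply Real.exp_le_exp.2
          apply mul_le_mul_of_nonneg_left _ (le_of_lt ha)
          exact_mod_cast hlen2
        calc Real.exp (a * N2.length) / deriv (wordComp N2) x
            ≤ Real.exp (a * n2) / Real.exp (lam * n2 / 2) :=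
              div_le_div₀ (le_of_lt (Real.exp_pos _)) h1 (Real.exp_pos _) hexp2
          _ = Real.exp (-(lam * n2)/4) := by
              rw [← Real.exp_sub]
              congr 1
              rw [ha_def]
              ring
      calc |wordComp (invW φ N2) z - wordComp (invW φ N2) z'|
          ≤ (Real.exp (a * N2.length) / deriv (wordComp N2) x) * |z - z'| := hcl
        _ ≤ Real.exp (-(lam * n2)/4) * |z - z'| :=
            mul_le_mul_of_nonneg_right hEC (abs_nonneg _)
    -- the composite map
    have hHw : IsWord G (N1 ++ invW φ N2) :=
      isWord_append hN1w (invW_isWord φ hφG hN2w)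
    have hFeval : ∀ z : ℝ, wordComp (N1 ++ invW φ N2) z
        = wordComp N1 (wordComp (invW φ N2) z) := by
      intro z
      rw [wordComp_append]
      rfl
    have hFlip : ∀ z ∈ Metric.closedBall zstar (δ/2), ∀ z' ∈ Metric.closedBall zstar (δ/2),
        |wordComp (N1 ++ invW φ N2) z - wordComp (N1 ++ invW φ N2) z'| ≤ κ * |z - z'| := by
      intro z hz z' hz'
      rw [hFeval, hFeval]
      calc |wordComp N1 (wordComp (invW φ N2) z) - wordComp N1 (wordComp (invW φ N2) z')|
          ≤ C₀ ^ N1.length * |wordComp (invW φ N2) z - wordComp (invW φ N2) z'| :=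
            word_lip hC1 hC₀ hbound hpos hN1w _ _
        _ ≤ C₀ ^ nn1 * (Real.exp (-(lam * n2)/4) * |z - z'|) := by
            apply mul_le_mul (pow_le_pow_right₀ (by linarith) hlen1) (hCL z z' hz hz')
              (abs_nonneg _)
            positivity
        _ = κ * |z - z'| := by rw [hκ_def]; ring
    have hy2mem : y2 ∈ Metric.closedBall zstar (δ/2) := by
      rw [Metric.mem_closedBall, Real.dist_eq]
      linarith [hy2ball]
    have hFy2 : wordComp (N1 ++ invW φ N2) y2 = wordComp N1 x := by
      rw [hFeval]
      congr 1
      exact invW_left φ hφl hN2w x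
    have hFmap : ∀ z ∈ Metric.closedBall zstar (δ/4),
        wordComp (N1 ++ invW φ N2) z ∈ Metric.closedBall zstar (δ/4) := by
      intro z hz
      have hzhalf : z ∈ Metric.closedBall zstar (δ/2) :=
        Metric.closedBall_subset_closedBall (by linarith) hz
      rw [Metric.mem_closedBall, Real.dist_eq] at hz
      have h1 : |wordComp (N1 ++ invW φ N2) z - wordComp N1 x| ≤ κ * |z - y2| := by
        rw [← hFy2]
        exact hFlip z hzhalf y2 hy2mem
      have h2 : |z - y2| ≤ δ/4 + δ/16 := by
        calc |z - y2| ≤ |z - zstar| + |zstar - y2| := abs_sub_le _ _ _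
          _ ≤ δ/4 + δ/16 := by
              have : |zstar - y2| = |y2 - zstar| := abs_sub_comm _ _
              rw [this]
              linarith [hy2ball, hz]
      rw [Metric.mem_closedBall, Real.dist_eq]
      have h3 : κ * |z - y2| ≤ (1/100) * (δ/4 + δ/16) := by
        apply mul_le_mul hκ1 h2 (abs_nonneg _) (by norm_num)
      calc |wordComp (N1 ++ invW φ N2) z - zstar|
          ≤ |wordComp (N1 ++ invW φ N2) z - wordComp N1 x| + |wordComp N1 x - zstar| :=
            abs_sub_le _ _ _
        _ ≤ (1/100) * (δ/4 + δ/16) + δ/16 := by linarith [h1, h3, hy1ball']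
        _ ≤ δ/4 := by linarith
    obtain ⟨u, humem, hufix, hconv, huniq⟩ := banach_ball (c := zstar) (r := δ/4)
      (by positivity) (le_of_lt hκpos) hκlt1 hFmap
      (fun z hz z' hz' => hFlip z (Metric.closedBall_subset_closedBall (by linarith) hz)
        z' (Metric.closedBall_subset_closedBall (by linarith) hz'))
    have humem' : |u - zstar| ≤ δ/4 := by
      rw [Metric.mem_closedBall, Real.dist_eq] at humem
      exact humem
    have hder : |deriv (wordComp (N1 ++ invW φ N2)) u| ≤ κ := by
      apply abs_deriv_le_of_lip (r := δ/8) (by positivity) (le_of_lt hκpos)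
      · exact (word_diff hC1 hHw).differentiableAt
      · intro z hzd
        apply hFlip
        · rw [Metric.mem_closedBall, Real.dist_eq]
          calc |z - zstar| ≤ |z - u| + |u - zstar| := abs_sub_le _ _ _
            _ ≤ δ/8 + δ/4 := by linarith [hzd, humem']
            _ ≤ δ/2 := by linarith
        · exact Metric.closedBall_subset_closedBall (by linarith) humem
    have hder1 : deriv (wordComp (N1 ++ invW φ N2)) u < 1 :=
      lt_of_le_of_lt (le_trans (le_abs_self _) hder) hκlt1
    have hWd : wordComp (invW φ N2) u = wordComp (invW φ N1) u := by
      have h1 : wordComp N1 (wordComp (invW φ N2) u) = u := by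
        rw [← hFeval]
        exact hufix
      have h2 := invW_left φ hφl hN1w (wordComp (invW φ N2) u)
      rw [h1] at h2
      exact h2.symm
    have hdest : |x - wordComp (invW φ N1) u| ≤ δ * Real.exp (-(lam * m) / 4) := by
      rw [← hWd]
      have hxinv : wordComp (invW φ N2) y2 = x := invW_left φ hφl hN2w x
      have humem2 : u ∈ Metric.closedBall zstar (δ/2) :=
        Metric.closedBall_subset_closedBall (by linarith) humem
      have hy2u : |y2 - u| ≤ δ := by
        calc |y2 - u| ≤ |y2 - zstar| + |zstar - u| := abs_sub_le _ _ _
          _ ≤ δ/16 + δ/4 := by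
              have : |zstar - u| = |u - zstar| := abs_sub_comm _ _
              rw [this]
              linarith [hy2ball, humem']
          _ ≤ δ := by linarith
      have hexpm : Real.exp (-(lam * n2)/4) ≤ Real.exp (-(lam * m)/4) := by
        apply Real.exp_le_exp.2
        have h := mul_le_mul_of_nonneg_left (show (m:ℝ) ≤ (n2:ℝ) by exact_mod_cast hmn2)
          (le_of_lt hlam)
        linarith
      calc |x - wordComp (invW φ N2) u|
          = |wordComp (invW φ N2) y2 - wordComp (invW φ N2) u| := by rw [hxinv]
        _ ≤ Real.exp (-(lam * n2)/4) * |y2 - u| := hCL y2 u hy2mem humem2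
        _ ≤ Real.exp (-(lam * m)/4) * δ := by
            apply mul_le_mul hexpm hy2u (abs_nonneg _) (le_of_lt (Real.exp_pos _))
        _ = δ * Real.exp (-(lam * m)/4) := by ring
    exact ⟨u, humem, hufix, hder1, hFmap, hconv, huniq, hdest⟩
  choose! uf huf using hmain
  -- Step N : endgame
  by_cases hall : ∀ x ∈ P, ∀ m : ℕ, ∀ x' ∈ P, ∀ m' : ℕ, uf x m = uf x' m'
  · exfalso
    set ustar : ℝ := uf x₀ 0 with hustar_def
    have htendd : Tendsto (fun m : ℕ => δ * Real.exp (-(lam * m)/4)) atTop (𝓝 0) := by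
      have heq : ∀ m : ℕ, Real.exp (-(lam * m)/4) = (Real.exp (-lam/4)) ^ m := by
        intro m
        rw [← Real.exp_nat_mul]
        congr 1
        ring
      have : Tendsto (fun m : ℕ => δ * Real.exp (-(lam * m)/4)) atTop (𝓝 (δ * 0)) := by
        apply Filter.Tendsto.const_mul
        simp only [heq]
        exact tendsto_pow_atTop_nhds_zero_of_lt_one (le_of_lt (Real.exp_pos _))
          (Real.exp_lt_one_iff.2 (by linarith))
      rwa [mul_zero] at this
    have hxd : ∀ x ∈ P, x = wordComp (invW φ N1) ustar := by
      intro x hx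
      have hbound2 : ∀ m : ℕ, |x - wordComp (invW φ N1) ustar| ≤ δ * Real.exp (-(lam * m)/4) := by
        intro m
        have h7 := (huf x hx m).2.2.2.2.2.2
        rwa [hall x hx m x₀ hx₀ 0] at h7
      by_contra hne
      have hpos' : 0 < |x - wordComp (invW φ N1) ustar| := abs_pos.2 (sub_ne_zero.2 hne)
      have hev := htendd.eventually (gt_mem_nhds hpos')
      obtain ⟨m, hm⟩ := hev.exists
      exact absurd (hbound2 m) (not_le.2 hm)
    exact hx01 ((hxd x₀ hx₀).trans (hxd x₁ hx₁).symm)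
  · push_neg at hall
    obtain ⟨x, hx, m, x', hx', m', hne⟩ := hall
    obtain ⟨hu1, hu2, hu3, hu4, hu5, hu6, hu7⟩ := huf x hx m
    obtain ⟨hv1, hv2, hv3, hv4, hv5, hv6, hv7⟩ := huf x' hx' m'
    refine ⟨uf x m, N1 ++ invW φ (V x (n2f x m)), N1 ++ invW φ (V x' (n2f x' m')),
      ?_, ?_, hu2, hu3, ?_, ?_⟩
    · exact isWord_append ((hPfacts x hx).2.2 ▸ hV1 x (hPA hx) nn1 (hPdat x hx).1)
        (invW_isWord φ hφG (hV1 x (hPA hx) (n2f x m) (hn2cs x hx m).1))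
    · exact isWord_append ((hPfacts x' hx').2.2 ▸ hV1 x' (hPA hx') nn1 (hPdat x' hx').1)
        (invW_isWord φ hφG (hV1 x' (hPA hx') (n2f x' m') (hn2cs x' hx' m').1))
    · intro heq
      exact hne (hv6 (uf x m) hu1 heq)
    · exact hu5 _ (hv4 (uf x m) hu1)
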